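/- The free group F_2 on generators {a, b} can be partitioned into countably many pairwise disjoint 5-large subsets, i.e., subsets P satisfying F_2 = F·P and F_2 = P·F' for some subsets F, F' of cardinality at most 4. -/

import Mathlib

open Pointwise Cardinal

namespace FGPaux

abbrev LL := List (Fin 2 × Bool)

/-- "no cancellation" relation between adjacent letters of a reduced word -/
def NC (p q : Fin 2 × Bool) : Prop := ¬(p.1 = q.1 ∧ p.2 = !q.2)

lemma step_not_chain {l m : LL} (h : FreeGroup.Red.Step l m) : ¬ List.Chain' NC l := by
  intro hc
  cases h with
  | @not L1 L2 x b =>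
    have h2 := (List.isChain_append.mp hc).2.1
    have h3 := (List.isChain_cons_cons.mp h2).1
    exact h3 ⟨rfl, (Bool.not_not b).symm⟩

lemma reduce_eq_self {l : LL} (h : List.Chain' NC l) : FreeGroup.reduce l = l := by
  rcases Relation.ReflTransGen.cases_head (FreeGroup.reduce.red (L := l)) with heq | ⟨m, hstep, _⟩
  · exact heq.symm
  · exact absurd h (step_not_chain hstep)

lemma chain'_of_reduce : ∀ {l : LL}, FreeGroup.reduce l = l → List.Chain' NC l := by
  intro l
  induction l with
  | nil => intro _; exact List.isChain_nil
  | cons x rest ih =>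
    intro h
    rw [FreeGroup.reduce.cons] at h
    cases hr : FreeGroup.reduce rest with
    | nil =>
      rw [hr] at h
      simp only [List.cons.injEq] at h
      rw [← h.2]
      exact List.isChain_singleton _
    | cons y ys =>
      rw [hr] at h
      have h' : (if x.1 = y.1 ∧ x.2 = !y.2 then ys else x :: y :: ys) = x :: rest := h
      have hle : (y :: ys).length ≤ rest.length := by
        rw [← hr]; exact FreeGroup.Red.length_le FreeGroup.reduce.red
      by_cases hc : x.1 = y.1 ∧ x.2 = !y.2
      · rw [if_pos hc] at h'
        exfalso
        subst h'
        simp at hle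
      · rw [if_neg hc] at h'
        have h2 : rest = y :: ys := by
          have := (List.cons.injEq x (y :: ys) x rest).mp h'
          exact this.2.symm
        rw [h2]
        exact List.isChain_cons_cons.mpr ⟨hc, h2 ▸ ih (h2 ▸ hr)⟩

lemma chain'_toWord (g : FreeGroup (Fin 2)) : List.Chain' NC g.toWord :=
  chain'_of_reduce (FreeGroup.reduce_toWord g)

lemma chain'_of_all_eq {l : LL} (c : Bool) (h : ∀ x ∈ l, x.2 = c) : List.Chain' NC l := by
  induction l with
  | nil => exact List.isChain_nil
  | cons x xs ih =>
    rw [show List.Chain' NC (x :: xs) = List.IsChain NC (x :: xs) from rfl, List.isChain_cons]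
    refine ⟨?_, ih fun y hy => h y (List.mem_cons_of_mem _ hy)⟩
    intro y hy hxy
    have h1 : x.2 = c := h x List.mem_cons_self
    have h2 : y.2 = c := h y (List.mem_cons_of_mem _ (List.mem_of_mem_head? hy))
    rw [h1, h2] at hxy
    simp at hxy

/-- the word `b a^j b` -/
def wS (j : ℕ) : LL := (1, true) :: (List.replicate j ((0 : Fin 2), true) ++ [((1 : Fin 2), true)])

/-- the word `a b a^j b` -/
def wS' (j : ℕ) : LL := ((0 : Fin 2), true) :: wS j

lemma mem_wS {j : ℕ} {x : Fin 2 × Bool} (hx : x ∈ wS j) : x.2 = true := by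
  simp only [wS, List.mem_cons, List.mem_append, List.mem_replicate, List.mem_singleton] at hx
  rcases hx with rfl | ⟨_, rfl⟩ | (rfl | h) <;> first | rfl | simp at h

lemma mem_wS' {j : ℕ} {x : Fin 2 × Bool} (hx : x ∈ wS' j) : x.2 = true := by
  rcases List.mem_cons.mp hx with rfl | h
  · rfl
  · exact mem_wS h

lemma chain'_wS (j : ℕ) : List.Chain' NC (wS j) := chain'_of_all_eq true fun _ => mem_wS
lemma chain'_wS' (j : ℕ) : List.Chain' NC (wS' j) := chain'_of_all_eq true fun _ => mem_wS'

def neg (p : Fin 2 × Bool) : Fin 2 × Bool := (p.1, !p.2)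

lemma invRev_eq_map_neg (l : LL) : FreeGroup.invRev l = List.map neg l.reverse := by
  simp [FreeGroup.invRev, neg, List.map_reverse]

lemma mem_invRev_wS {j : ℕ} {x : Fin 2 × Bool} (hx : x ∈ FreeGroup.invRev (wS j)) :
    x.2 = false := by
  rw [invRev_eq_map_neg] at hx
  obtain ⟨y, hy, rfl⟩ := List.mem_map.mp hx
  have := mem_wS (List.mem_reverse.mp hy)
  simp [neg, this]

lemma mem_invRev_wS' {j : ℕ} {x : Fin 2 × Bool} (hx : x ∈ FreeGroup.invRev (wS' j)) :
    x.2 = false := by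
  rw [invRev_eq_map_neg] at hx
  obtain ⟨y, hy, rfl⟩ := List.mem_map.mp hx
  have := mem_wS' (List.mem_reverse.mp hy)
  simp [neg, this]

/-- run of a's terminated by b, reading a list -/
def runB : LL → Option ℕ
  | [] => none
  | x :: rest =>
    if x = ((0 : Fin 2), true) then (runB rest).map (· + 1)
    else if x = ((1 : Fin 2), true) then some 0
    else none

/-- suffix code read off a *reversed* word -/
def scRev : LL → ℕ
  | [] => 0
  | x :: rest => if x = ((1 : Fin 2), true) then (runB rest).getD 0 else 0

def sc (g : FreeGroup (Fin 2)) : ℕ := scRev g.toWord.reverse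

lemma runB_replicate (j : ℕ) (rest : LL) :
    runB (List.replicate j ((0 : Fin 2), true) ++ ((1 : Fin 2), true) :: rest) = some j := by
  induction j with
  | zero => simp [runB]
  | succ n ih => simpa [runB, List.replicate_succ] using ih

lemma scRev_pattern (j : ℕ) (rest : LL) :
    scRev (((1 : Fin 2), true) :: (List.replicate j ((0 : Fin 2), true) ++ ((1 : Fin 2), true) :: rest)) = j := by
  simp [scRev, runB_replicate]

lemma runB_append_false {e : LL} (he : ∀ x ∈ e, x.2 = false) (l : LL) :
    runB (l ++ e) = runB l := by
  induction l with
  | nil =>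
    cases e with
    | nil => rfl
    | cons x xs =>
      have hx : x.2 = false := he x List.mem_cons_self
      simp only [List.nil_append, runB]
      rw [if_neg (by simp [Prod.ext_iff, hx]), if_neg (by simp [Prod.ext_iff, hx])]
  | cons x xs ih =>
    show runB ((x :: xs) ++ e) = _
    rw [List.cons_append]
    show (if x = ((0:Fin 2),true) then (runB (xs ++ e)).map (· + 1)
      else if x = ((1:Fin 2),true) then some 0 else none) = _
    rw [ih]
    rfl

lemma scRev_append_false {e : LL} (he : ∀ x ∈ e, x.2 = false) (l : LL) :
    scRev (l ++ e) = scRev l := by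
  cases l with
  | nil =>
    cases e with
    | nil => rfl
    | cons x xs =>
      have hx : x.2 = false := he x List.mem_cons_self
      simp only [List.nil_append, scRev]
      rw [if_neg (by simp [Prod.ext_iff, hx])]
  | cons x xs =>
    simp only [List.cons_append, scRev, runB_append_false he]

lemma toWord_mul_mk (g : FreeGroup (Fin 2)) (w : LL) (hw : List.Chain' NC w)
    (hj : ∀ x ∈ g.toWord.getLast?, ∀ y ∈ w.head?, NC x y) :
    (g * FreeGroup.mk w).toWord = g.toWord ++ w := by
  conv_lhs => rw [← FreeGroup.mk_toWord (x := g)]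
  rw [FreeGroup.mul_mk, FreeGroup.toWord_mk]
  exact reduce_eq_self (List.isChain_append.mpr ⟨chain'_toWord g, hw, hj⟩)

lemma toWord_mk_mul (w : LL) (g : FreeGroup (Fin 2)) (hw : List.Chain' NC w)
    (hj : ∀ x ∈ w.getLast?, ∀ y ∈ g.toWord.head?, NC x y) :
    (FreeGroup.mk w * g).toWord = w ++ g.toWord := by
  conv_lhs => rw [← FreeGroup.mk_toWord (x := g)]
  rw [FreeGroup.mul_mk, FreeGroup.toWord_mk]
  exact reduce_eq_self (List.isChain_append.mpr ⟨hw, chain'_toWord g, hj⟩)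

lemma head?_toWord_inv (g : FreeGroup (Fin 2)) :
    (g⁻¹.toWord).head? = (g.toWord.getLast?).map neg := by
  rw [FreeGroup.toWord_inv, invRev_eq_map_neg, List.head?_map, List.head?_reverse]

lemma getLast?_map' (f : Fin 2 × Bool → Fin 2 × Bool) (l : LL) :
    (l.map f).getLast? = l.getLast?.map f := by
  rw [← List.head?_reverse, ← List.map_reverse, List.head?_map, List.head?_reverse]

lemma wS_reverse (j : ℕ) : (wS j).reverse = wS j := by
  simp [wS, List.reverse_cons, List.reverse_append, List.reverse_replicate]

lemma wS'_reverse (j : ℕ) : (wS' j).reverse = wS j ++ [((0 : Fin 2), true)] := by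
  rw [wS', List.reverse_cons, wS_reverse]

lemma scRev_wS_append (j : ℕ) (rest : LL) : scRev (wS j ++ rest) = j := by
  have h : wS j ++ rest
      = ((1 : Fin 2), true) :: (List.replicate j ((0 : Fin 2), true) ++ (((1 : Fin 2), true) :: rest)) := by
    simp [wS]
  rw [h, scRev_pattern]

lemma getLast?_invRev_wS (j : ℕ) :
    (FreeGroup.invRev (wS j)).getLast? = some ((1 : Fin 2), false) := by
  rw [invRev_eq_map_neg, getLast?_map', List.getLast?_reverse]
  rfl

lemma getLast?_invRev_wS' (j : ℕ) :
    (FreeGroup.invRev (wS' j)).getLast? = some ((0 : Fin 2), false) := by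
  rw [invRev_eq_map_neg, getLast?_map', List.getLast?_reverse]
  rfl

lemma realize (g : FreeGroup (Fin 2)) (j : ℕ) :
    ∃ w : LL, (w = wS j ∨ w = wS' j) ∧
      sc (g * FreeGroup.mk w) = j ∧ sc ((g * FreeGroup.mk w)⁻¹) = sc g⁻¹ := by
  by_cases hb : g.toWord.getLast? = some ((1 : Fin 2), false)
  · -- last letter is b⁻¹ : use  a b a^j b
    refine ⟨wS' j, Or.inr rfl, ?_, ?_⟩
    · have hmul : (g * FreeGroup.mk (wS' j)).toWord = g.toWord ++ wS' j := by
        apply toWord_mul_mk _ _ (chain'_wS' j)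
        intro x hx y hy
        have hx' : x = ((1 : Fin 2), false) := by
          rw [Option.mem_def, hb, Option.some.injEq] at hx
          exact hx.symm
        have hy' : y = ((0 : Fin 2), true) := by
          have := hy; simp [wS'] at this; exact this.symm
        rintro ⟨h1, h2⟩
        rw [hx', hy'] at h1
        simp at h1
      unfold sc
      rw [hmul, List.reverse_append, wS'_reverse, List.append_assoc]
      exact scRev_wS_append j _
    · have hinv : (g * FreeGroup.mk (wS' j))⁻¹
          = FreeGroup.mk (FreeGroup.invRev (wS' j)) * g⁻¹ := by
        rw [mul_inv_rev, FreeGroup.inv_mk]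
      have hmul2 : (FreeGroup.mk (FreeGroup.invRev (wS' j)) * g⁻¹).toWord
          = FreeGroup.invRev (wS' j) ++ g⁻¹.toWord := by
        apply toWord_mk_mul _ _ (chain'_of_all_eq false fun _ => mem_invRev_wS')
        intro x hx y hy
        have hx' : x = ((0 : Fin 2), false) := by
          rw [Option.mem_def, getLast?_invRev_wS'] at hx
          exact (Option.some.injEq _ _ ▸ hx).symm
        have hy' : y = ((1 : Fin 2), true) := by
          rw [Option.mem_def, head?_toWord_inv, hb] at hy
          simpa [neg] using hy.symm
        rintro ⟨h1, h2⟩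
        rw [hx', hy'] at h1
        simp at h1
      rw [hinv]
      unfold sc
      rw [hmul2, List.reverse_append]
      apply scRev_append_false
      intro x hx
      exact mem_invRev_wS' (List.mem_reverse.mp hx)
  · -- last letter is not b⁻¹ : use  b a^j b
    refine ⟨wS j, Or.inl rfl, ?_, ?_⟩
    · have hmul : (g * FreeGroup.mk (wS j)).toWord = g.toWord ++ wS j := by
        apply toWord_mul_mk _ _ (chain'_wS j)
        intro x hx y hy
        have hy' : y = ((1 : Fin 2), true) := by
          have := hy; simp [wS] at this; exact this.symm
        rintro ⟨h1, h2⟩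
        rw [hy'] at h1 h2
        apply hb
        rw [Option.mem_def] at hx
        rw [hx]
        congr 1
        have h2' : x.2 = false := by simpa using h2
        have h1' : x.1 = 1 := by simpa using h1
        cases x
        simp_all
      unfold sc
      rw [hmul, List.reverse_append, wS_reverse]
      exact scRev_wS_append j _
    · have hinv : (g * FreeGroup.mk (wS j))⁻¹
          = FreeGroup.mk (FreeGroup.invRev (wS j)) * g⁻¹ := by
        rw [mul_inv_rev, FreeGroup.inv_mk]
      have hmul2 : (FreeGroup.mk (FreeGroup.invRev (wS j)) * g⁻¹).toWord
          = FreeGroup.invRev (wS j) ++ g⁻¹.toWord := by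
        apply toWord_mk_mul _ _ (chain'_of_all_eq false fun _ => mem_invRev_wS)
        intro x hx y hy
        have hx' : x = ((1 : Fin 2), false) := by
          rw [Option.mem_def, getLast?_invRev_wS] at hx
          exact (Option.some.injEq _ _ ▸ hx).symm
        rw [Option.mem_def, head?_toWord_inv] at hy
        rintro ⟨h1, h2⟩
        cases hz : g.toWord.getLast? with
        | none => rw [hz] at hy; simp at hy
        | some z =>
          rw [hz, Option.map_some] at hy
          apply hb
          rw [hz]
          congr 1
          have hyz : y = neg z := by injection hy with h; exact h.symm
          rw [hx'] at h1 h2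
          rw [hyz] at h1 h2
          simp only [neg] at h1 h2
          apply Prod.ext h1.symm
          simpa using h2.symm
      rw [hinv]
      unfold sc
      rw [hmul2, List.reverse_append]
      apply scRev_append_false
      intro x hx
      exact mem_invRev_wS (List.mem_reverse.mp hx)

/-- symmetric pairing function on codes -/
def psi (i j : ℕ) : ℕ :=
  if i = 0 then (j - 1) / 2
  else if j = 0 then (i - 1) / 2
  else if (i - 1) / 2 = (j - 1) / 2 then (i - 1) / 2
  else if (i - 1) % 2 = (j - 1) % 2 then
    (if (i - 1) / 2 ≤ (j - 1) / 2 then (j - 1) / 2 else (i - 1) / 2)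
  else
    (if (i - 1) / 2 ≤ (j - 1) / 2 then (i - 1) / 2 else (j - 1) / 2)

lemma psi_symm (i j : ℕ) : psi i j = psi j i := by
  unfold psi
  split_ifs <;> first | exact (‹False›).elim | omega

lemma psi_cover (i m : ℕ) : psi i (2 * m + 1) = m ∨ psi i (2 * m + 2) = m := by
  by_cases h0 : i = 0
  · left; subst h0; unfold psi; split_ifs <;> first | exact (‹False›).elim | omega
  by_cases hq : (i - 1) / 2 = m
  · left; unfold psi; split_ifs <;> first | exact (‹False›).elim | omega
  by_cases hlt : (i - 1) / 2 < m
  · -- want max : choose j with same parity as i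
    by_cases hx : (i - 1) % 2 = 0
    · left; unfold psi; split_ifs <;> first | exact (‹False›).elim | omega
    · right; unfold psi; split_ifs <;> first | exact (‹False›).elim | omega
  · -- q i > m : want min : choose j with opposite parity
    by_cases hx : (i - 1) % 2 = 0
    · right; unfold psi; split_ifs <;> first | exact (‹False›).elim | omega
    · left; unfold psi; split_ifs <;> first | exact (‹False›).elim | omega

def phi (g : FreeGroup (Fin 2)) : ℕ := psi (sc g⁻¹) (sc g)

lemma phi_inv (g : FreeGroup (Fin 2)) : phi g⁻¹ = phi g := by
  unfold phi
  rw [inv_inv]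
  exact psi_symm _ _

lemma phi_realize (g : FreeGroup (Fin 2)) (m : ℕ) :
    ∃ w : LL,
      (w = wS (2 * m + 1) ∨ w = wS' (2 * m + 1) ∨ w = wS (2 * m + 2) ∨ w = wS' (2 * m + 2)) ∧
      phi (g * FreeGroup.mk w) = m := by
  rcases psi_cover (sc g⁻¹) m with h | h
  · obtain ⟨w, hw, h1, h2⟩ := realize g (2 * m + 1)
    exact ⟨w, by tauto, by unfold phi; rw [h1, h2]; exact h⟩
  · obtain ⟨w, hw, h1, h2⟩ := realize g (2 * m + 2)
    exact ⟨w, by tauto, by unfold phi; rw [h1, h2]; exact h⟩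

lemma card_four {α : Type*} (a b c d : α) : #({a, b, c, d} : Set α) ≤ 4 := by
  have h1 : #({a, b, c, d} : Set α) ≤ #({b, c, d} : Set α) + 1 := Cardinal.mk_insert_le
  have h2 : #({b, c, d} : Set α) ≤ #({c, d} : Set α) + 1 := Cardinal.mk_insert_le
  have h3 : #({c, d} : Set α) ≤ #({d} : Set α) + 1 := Cardinal.mk_insert_le
  have h4 : #({d} : Set α) = 1 := Cardinal.mk_singleton d
  calc #({a, b, c, d} : Set α) ≤ #({b, c, d} : Set α) + 1 := h1
    _ ≤ (#({c, d} : Set α) + 1) + 1 := by gcongr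
    _ ≤ ((#({d} : Set α) + 1) + 1) + 1 := by gcongr
    _ = 4 := by rw [h4]; norm_num

end FGPaux

open FGPaux in
theorem free_group_two_partition_five_large :
    ∃ P : ℕ → Set (FreeGroup (Fin 2)),
      Pairwise (Function.onFun Disjoint P) ∧
      (⋃ m, P m) = Set.univ ∧
      ∀ m, (∃ F : Set (FreeGroup (Fin 2)), #F ≤ 4 ∧ F * P m = Set.univ) ∧
           (∃ F' : Set (FreeGroup (Fin 2)), #F' ≤ 4 ∧ P m * F' = Set.univ) := by
  refine ⟨fun m => {g | phi g = m}, ?_, ?_, ?_⟩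
  · intro m n hmn
    rw [Function.onFun, Set.disjoint_left]
    rintro g (hg : phi g = m) (hg' : phi g = n)
    exact hmn (hg ▸ hg')
  · rw [Set.eq_univ_iff_forall]
    intro g
    exact Set.mem_iUnion.mpr ⟨phi g, rfl⟩
  · intro m
    constructor
    · -- left largeness
      refine ⟨{FreeGroup.mk (wS (2 * m + 1)), FreeGroup.mk (wS' (2 * m + 1)),
        FreeGroup.mk (wS (2 * m + 2)), FreeGroup.mk (wS' (2 * m + 2))}, card_four _ _ _ _, ?_⟩
      rw [Set.eq_univ_iff_forall]
      intro g
      obtain ⟨w, hw, hphi⟩ := phi_realize g⁻¹ m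
      refine Set.mem_mul.mpr ⟨FreeGroup.mk w, ?_, (g⁻¹ * FreeGroup.mk w)⁻¹, ?_, by group⟩
      · rcases hw with rfl | rfl | rfl | rfl <;> simp
      · show phi (g⁻¹ * FreeGroup.mk w)⁻¹ = m
        rw [phi_inv]
        exact hphi
    · -- right largeness
      refine ⟨{(FreeGroup.mk (wS (2 * m + 1)))⁻¹, (FreeGroup.mk (wS' (2 * m + 1)))⁻¹,
        (FreeGroup.mk (wS (2 * m + 2)))⁻¹, (FreeGroup.mk (wS' (2 * m + 2)))⁻¹},
        card_four _ _ _ _, ?_⟩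
      rw [Set.eq_univ_iff_forall]
      intro g
      obtain ⟨w, hw, hphi⟩ := phi_realize g m
      refine Set.mem_mul.mpr ⟨g * FreeGroup.mk w, hphi, (FreeGroup.mk w)⁻¹, ?_, by group⟩
      rcases hw with rfl | rfl | rfl | rfl <;> simp
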